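/- Let H₀ = λ⁻¹ I with λ > 0, and let (sᵢ, yᵢ), i = 1, …, p, be vectors in ℝⁿ satisfying sᵢᵀyᵢ > 0, sᵢᵀsᵢ/(sᵢᵀyᵢ) ≤ 1/μ₂ and yᵢᵀyᵢ/(sᵢᵀyᵢ) ≤ 1/μ₃ for positive constants μ₂, μ₃. Define recursively Hᵢ = (I − ρᵢ sᵢ yᵢᵀ) Hᵢ₋₁ (I − ρᵢ yᵢ sᵢᵀ) + ρᵢ sᵢ sᵢᵀ with ρᵢ = 1/(sᵢᵀyᵢ). Then H_p is symmetric positive definite and (λ + p/μ₃)⁻¹ I ⪯ H_p ⪯ (λ⁻¹ μ̂^p + ((μ̂^p − 1)/(μ̂ − 1)) (1/μ₂)) I, where μ̂ = (1 + 1/√(μ₂μ₃))². -/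

import Mathlib

open Matrix

variable {n : ℕ}

private lemma dot_self_nonneg (x : Fin n → ℝ) : 0 ≤ x ⬝ᵥ x :=
  Finset.sum_nonneg fun i _ => mul_self_nonneg _

private lemma dot_cs (a b : Fin n → ℝ) : (a ⬝ᵥ b) ^ 2 ≤ (a ⬝ᵥ a) * (b ⬝ᵥ b) := by
  simpa [dotProduct, sq] using Finset.sum_mul_sq_le_sq_mul_sq Finset.univ a b

private lemma vmv_mulVec (w v x : Fin n → ℝ) : vecMulVec w v *ᵥ x = (v ⬝ᵥ x) • w := by
  funext i
  simp only [Matrix.mulVec, vecMulVec_apply, dotProduct, Pi.smul_apply, smul_eq_mul,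
    Finset.mul_sum]
  rw [Finset.sum_mul]
  refine Finset.sum_congr rfl fun j _ => ?_
  ring

private lemma vmv_ct (a b : Fin n → ℝ) : (vecMulVec a b)ᴴ = vecMulVec b a := by
  ext i j
  simp [conjTranspose_apply, vecMulVec_apply, mul_comm]

private lemma quad_eq (A : Matrix (Fin n) (Fin n) ℝ) (s y x : Fin n → ℝ) (ρ : ℝ) :
    x ⬝ᵥ ((((1 - ρ • vecMulVec s y) * A * (1 - ρ • vecMulVec y s))
        + ρ • vecMulVec s s) *ᵥ x)
      = (x - (ρ * (s ⬝ᵥ x)) • y) ⬝ᵥ (A *ᵥ (x - (ρ * (s ⬝ᵥ x)) • y)) + ρ * (s ⬝ᵥ x) ^ 2 := by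
  set z := x - (ρ * (s ⬝ᵥ x)) • y with hzdef
  have h1 : (1 - ρ • vecMulVec y s) *ᵥ x = z := by
    rw [sub_mulVec, one_mulVec, smul_mulVec, vmv_mulVec, smul_smul, hzdef]
  set v := A *ᵥ z with hv
  have h2 : ((1 - ρ • vecMulVec s y) * A * (1 - ρ • vecMulVec y s)) *ᵥ x
      = v - (ρ * (y ⬝ᵥ v)) • s := by
    rw [← Matrix.mulVec_mulVec, h1, ← Matrix.mulVec_mulVec, ← hv,
      sub_mulVec, one_mulVec, smul_mulVec, vmv_mulVec, smul_smul]
  rw [add_mulVec, dotProduct_add, h2, smul_mulVec, vmv_mulVec,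
    dotProduct_sub, dotProduct_smul, dotProduct_smul]
  have h3 : z ⬝ᵥ v = x ⬝ᵥ v - (ρ * (s ⬝ᵥ x)) * (y ⬝ᵥ v) := by
    rw [hzdef, sub_dotProduct, smul_dotProduct, smul_eq_mul]
  rw [h3, dotProduct_smul, smul_eq_mul, smul_eq_mul, dotProduct_comm x s, smul_eq_mul]
  ring

private lemma step_lower {μ₃ σ Y X t q c c' : ℝ} (hμ₃ : 0 < μ₃) (hσ : 0 < σ)
    (hY : 0 ≤ Y) (hX : 0 ≤ X) (hc : 0 < c)
    (hq : q ^ 2 ≤ Y * X) (hYσ : Y * μ₃ ≤ σ)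
    (hc' : c' * (c + μ₃) = c * μ₃) :
    c' * X ≤ c * (X - 2 * (σ⁻¹ * t) * q + (σ⁻¹ * t) ^ 2 * Y) + σ⁻¹ * t ^ 2 := by
  set u := σ⁻¹ * t with hu
  have hσ' : σ ≠ 0 := ne_of_gt hσ
  have ht2 : σ⁻¹ * t ^ 2 = σ * u ^ 2 := by rw [hu]; field_simp
  rw [ht2]
  have hpos : 0 < (c * Y + σ) * (c + μ₃) :=
    mul_pos (by positivity) (by positivity)
  rw [← sub_nonneg]
  have hid : ((c * Y + σ) * (c + μ₃))
        * (c * (X - 2 * u * q + u ^ 2 * Y) + σ * u ^ 2 - c' * X)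
      = (c + μ₃) * (u * (c * Y + σ) - c * q) ^ 2
        + c ^ 2 * (c * (Y * X - q ^ 2) + X * (σ - Y * μ₃) + μ₃ * (Y * X - q ^ 2)) := by
    linear_combination (-(X * (c * Y + σ))) * hc'
  have key : 0 ≤ ((c * Y + σ) * (c + μ₃))
      * (c * (X - 2 * u * q + u ^ 2 * Y) + σ * u ^ 2 - c' * X) := by
    rw [hid]
    have h1 : 0 ≤ (c + μ₃) * (u * (c * Y + σ) - c * q) ^ 2 := by positivity
    have ha : 0 ≤ Y * X - q ^ 2 := by linarith
    have hb : 0 ≤ X * (σ - Y * μ₃) := mul_nonneg hX (by linarith)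
    have h2 : 0 ≤ c * (Y * X - q ^ 2) + X * (σ - Y * μ₃) + μ₃ * (Y * X - q ^ 2) := by
      have := mul_nonneg hc.le ha
      have := mul_nonneg hμ₃.le ha
      linarith
    nlinarith [mul_nonneg (sq_nonneg c) h2]
  exact nonneg_of_mul_nonneg_right key hpos

private lemma step_upper {μ₂ μ₃ σ S Y X t q c : ℝ} (hμ₂ : 0 < μ₂) (hμ₃ : 0 < μ₃)
    (hσ : 0 < σ) (hS : 0 ≤ S) (hY : 0 ≤ Y) (hX : 0 ≤ X) (hc : 0 ≤ c)
    (ht : t ^ 2 ≤ S * X) (hq : q ^ 2 ≤ Y * X)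
    (hS' : S / σ ≤ 1 / μ₂) (hY' : Y / σ ≤ 1 / μ₃) :
    c * (X - 2 * (σ⁻¹ * t) * q + (σ⁻¹ * t) ^ 2 * Y) + σ⁻¹ * t ^ 2
      ≤ ((1 + 1 / Real.sqrt (μ₂ * μ₃)) ^ 2 * c + 1 / μ₂) * X := by
  set β := 1 / Real.sqrt (μ₂ * μ₃) with hβdef
  have hμμ : 0 < μ₂ * μ₃ := mul_pos hμ₂ hμ₃
  have hβ : 0 < β := by positivity
  have hβ2 : β ^ 2 = 1 / μ₂ * (1 / μ₃) := by
    rw [hβdef, div_pow, one_pow, Real.sq_sqrt hμμ.le]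
    field_simp
  set u := σ⁻¹ * t with hu
  have hσi : (0:ℝ) ≤ σ⁻¹ := inv_nonneg.mpr hσ.le
  have hp : S / σ * (Y / σ) ≤ 1 / μ₂ * (1 / μ₃) :=
    mul_le_mul hS' hY' (div_nonneg hY hσ.le) (by positivity)
  -- bound σ⁻¹ t² ≤ X/μ₂
  have h1 : σ⁻¹ * t ^ 2 ≤ 1 / μ₂ * X := by
    calc σ⁻¹ * t ^ 2 ≤ σ⁻¹ * (S * X) := mul_le_mul_of_nonneg_left ht hσi
    _ = S / σ * X := by rw [div_eq_mul_inv]; ring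
    _ ≤ 1 / μ₂ * X := mul_le_mul_of_nonneg_right hS' hX
  -- bound u² Y ≤ β² X
  have h2 : u ^ 2 * Y ≤ β ^ 2 * X := by
    calc u ^ 2 * Y = (σ⁻¹) ^ 2 * (t ^ 2 * Y) := by rw [hu]; ring
    _ ≤ (σ⁻¹) ^ 2 * (S * X * Y) :=
        mul_le_mul_of_nonneg_left (mul_le_mul_of_nonneg_right ht hY) (sq_nonneg _)
    _ = S / σ * (Y / σ) * X := by rw [div_eq_mul_inv, div_eq_mul_inv]; ring
    _ ≤ 1 / μ₂ * (1 / μ₃) * X := mul_le_mul_of_nonneg_right hp hX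
    _ = β ^ 2 * X := by rw [hβ2]
  -- bound -2 u q ≤ 2 β X
  have h3sq : (u * q) ^ 2 ≤ (β * X) ^ 2 := by
    calc (u * q) ^ 2 = (σ⁻¹) ^ 2 * (t ^ 2 * q ^ 2) := by rw [hu]; ring
    _ ≤ (σ⁻¹) ^ 2 * (S * X * (Y * X)) := by
        apply mul_le_mul_of_nonneg_left _ (sq_nonneg _)
        exact mul_le_mul ht hq (sq_nonneg _) (mul_nonneg hS hX)
    _ = S / σ * (Y / σ) * X ^ 2 := by rw [div_eq_mul_inv, div_eq_mul_inv]; ring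
    _ ≤ 1 / μ₂ * (1 / μ₃) * X ^ 2 := mul_le_mul_of_nonneg_right hp (sq_nonneg _)
    _ = (β * X) ^ 2 := by rw [mul_pow, hβ2]
  have h3 : -(β * X) ≤ u * q := (abs_le_of_sq_le_sq' h3sq (by positivity)).1
  have hzX : X - 2 * u * q + u ^ 2 * Y ≤ (1 + β) ^ 2 * X := by nlinarith [h2, h3]
  calc c * (X - 2 * u * q + u ^ 2 * Y) + σ⁻¹ * t ^ 2
      ≤ c * ((1 + β) ^ 2 * X) + 1 / μ₂ * X := by
        exact add_le_add (mul_le_mul_of_nonneg_left hzX hc) h1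
    _ = ((1 + β) ^ 2 * c + 1 / μ₂) * X := by ring

private lemma smul_one_herm (r : ℝ) :
    ((r : ℝ) • (1 : Matrix (Fin n) (Fin n) ℝ)).IsHermitian := by
  show _ᴴ = _
  rw [conjTranspose_smul, conjTranspose_one, star_trivial]

private lemma dot_self_pos {x : Fin n → ℝ} (hx : x ≠ 0) : 0 < x ⬝ᵥ x :=
  lt_of_le_of_ne (dot_self_nonneg x) (Ne.symm (mt dotProduct_self_eq_zero.mp hx))


/-- Lemma 5: the L-BFGS matrix H_p built from damped pairs is positive definite
and bounded: (λ + p/μ₃)⁻¹ I ⪯ H_p ⪯ (λ⁻¹ μ̂^p + ((μ̂^p−1)/(μ̂−1))/μ₂) I,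
where μ̂ = (1 + 1/√(μ₂μ₃))². -/
theorem lbfgs_matrix_bounds {n p : ℕ} (lam μ₂ μ₃ : ℝ)
    (hlam : 0 < lam) (hμ₂ : 0 < μ₂) (hμ₃ : 0 < μ₃)
    (s y : ℕ → (Fin n → ℝ)) (H : ℕ → Matrix (Fin n) (Fin n) ℝ)
    (hsy : ∀ i, 1 ≤ i → i ≤ p → 0 < s i ⬝ᵥ y i)
    (hss : ∀ i, 1 ≤ i → i ≤ p → (s i ⬝ᵥ s i) / (s i ⬝ᵥ y i) ≤ 1 / μ₂)
    (hyy : ∀ i, 1 ≤ i → i ≤ p → (y i ⬝ᵥ y i) / (s i ⬝ᵥ y i) ≤ 1 / μ₃)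
    (hH0 : H 0 = lam⁻¹ • (1 : Matrix (Fin n) (Fin n) ℝ))
    (hHrec : ∀ i, 1 ≤ i → i ≤ p →
      H i = (1 - (s i ⬝ᵥ y i)⁻¹ • vecMulVec (s i) (y i)) * H (i - 1)
              * (1 - (s i ⬝ᵥ y i)⁻¹ • vecMulVec (y i) (s i))
            + (s i ⬝ᵥ y i)⁻¹ • vecMulVec (s i) (s i)) :
    (H p).PosDef ∧
      (H p - ((lam + p / μ₃)⁻¹ : ℝ) • (1 : Matrix (Fin n) (Fin n) ℝ)).PosSemidef ∧
      (((lam⁻¹ * ((1 + 1 / Real.sqrt (μ₂ * μ₃)) ^ 2) ^ p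
          + (((1 + 1 / Real.sqrt (μ₂ * μ₃)) ^ 2) ^ p - 1)
              / ((1 + 1 / Real.sqrt (μ₂ * μ₃)) ^ 2 - 1) * (1 / μ₂)) : ℝ)
          • (1 : Matrix (Fin n) (Fin n) ℝ) - H p).PosSemidef := by
  set μh : ℝ := (1 + 1 / Real.sqrt (μ₂ * μ₃)) ^ 2 with hμhdef
  have hβ : 0 < 1 / Real.sqrt (μ₂ * μ₃) := by positivity
  have hμh1 : 1 < μh := by rw [hμhdef]; nlinarith [hβ]
  have hμhne : μh - 1 ≠ 0 := ne_of_gt (by linarith)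
  -- main induction
  have main : ∀ i, i ≤ p → (H i).IsHermitian ∧ ∀ x : Fin n → ℝ,
      (lam + (i : ℝ) / μ₃)⁻¹ * (x ⬝ᵥ x) ≤ x ⬝ᵥ (H i *ᵥ x) ∧
      x ⬝ᵥ (H i *ᵥ x)
        ≤ (lam⁻¹ * μh ^ i + (μh ^ i - 1) / (μh - 1) * (1 / μ₂)) * (x ⬝ᵥ x) := by
    intro i
    induction i with
    | zero =>
      intro _
      constructor
      · rw [hH0]; exact smul_one_herm _
      · intro x
        have hx : x ⬝ᵥ (H 0 *ᵥ x) = lam⁻¹ * (x ⬝ᵥ x) := by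
          rw [hH0, smul_mulVec, one_mulVec, dotProduct_smul, smul_eq_mul]
        rw [hx]
        norm_num
    | succ i ih =>
      intro hip
      obtain ⟨ihH, ihB⟩ := ih (by omega)
      have h1p : 1 ≤ i + 1 := by omega
      have hrec := hHrec (i + 1) h1p hip
      rw [Nat.add_sub_cancel] at hrec
      set σ : ℝ := s (i + 1) ⬝ᵥ y (i + 1) with hσdef
      have hσ : 0 < σ := hsy (i + 1) h1p hip
      have hS' := hss (i + 1) h1p hip
      have hY' := hyy (i + 1) h1p hip
      have hYσ : (y (i + 1) ⬝ᵥ y (i + 1)) * μ₃ ≤ σ := by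
        have := (div_le_div_iff₀ hσ hμ₃).mp hY'
        linarith
      constructor
      · -- Hermitian
        show _ᴴ = _
        rw [hrec]
        simp only [conjTranspose_add, conjTranspose_mul, conjTranspose_sub,
          conjTranspose_one, conjTranspose_smul, vmv_ct, star_trivial,
          ihH.eq, Matrix.mul_assoc]
      · intro x
        have hquad := quad_eq (H i) (s (i + 1)) (y (i + 1)) x σ⁻¹
        rw [← hrec] at hquad
        set t : ℝ := s (i + 1) ⬝ᵥ x with htdef
        set z : Fin n → ℝ := x - (σ⁻¹ * t) • y (i + 1) with hzdef
        set X : ℝ := x ⬝ᵥ x with hXdef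
        set Y : ℝ := y (i + 1) ⬝ᵥ y (i + 1) with hYdef
        set S : ℝ := s (i + 1) ⬝ᵥ s (i + 1) with hSdef
        set q : ℝ := y (i + 1) ⬝ᵥ x with hqdef
        have hzz : z ⬝ᵥ z = X - 2 * (σ⁻¹ * t) * q + (σ⁻¹ * t) ^ 2 * Y := by
          rw [hzdef, sub_dotProduct, smul_dotProduct, dotProduct_sub, dotProduct_sub,
            dotProduct_smul, dotProduct_smul, smul_eq_mul, smul_eq_mul, smul_eq_mul,
            dotProduct_comm x (y (i + 1))]
          ring
        have hX0 : 0 ≤ X := dot_self_nonneg x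
        have hY0 : 0 ≤ Y := dot_self_nonneg _
        have hS0 : 0 ≤ S := dot_self_nonneg _
        have hts : t ^ 2 ≤ S * X := dot_cs (s (i + 1)) x
        have hqs : q ^ 2 ≤ Y * X := dot_cs (y (i + 1)) x
        obtain ⟨ihlo, ihhi⟩ := ihB z
        rw [hzz] at ihlo ihhi
        constructor
        · -- lower bound
          have hd : (0:ℝ) < lam + (i : ℝ) / μ₃ := by positivity
          have hd1 : (0:ℝ) < lam + ((i : ℕ) + 1 : ℝ) / μ₃ := by positivity
          have hc : 0 < (lam + (i : ℝ) / μ₃)⁻¹ := inv_pos.mpr hd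
          have hc' : (lam + ((i + 1 : ℕ) : ℝ) / μ₃)⁻¹ * ((lam + (i : ℝ) / μ₃)⁻¹ + μ₃)
              = (lam + (i : ℝ) / μ₃)⁻¹ * μ₃ := by
            push_cast
            field_simp
            ring
          have hstep := step_lower (t := t) hμ₃ hσ hY0 hX0 hc hqs hYσ hc'
          rw [hquad]
          linarith
        · -- upper bound
          have hc0 : 0 ≤ lam⁻¹ * μh ^ i + (μh ^ i - 1) / (μh - 1) * (1 / μ₂) := by
            have h1 : (0:ℝ) ≤ lam⁻¹ * μh ^ i := by positivity
            have h2 : (1:ℝ) ≤ μh ^ i := one_le_pow₀ hμh1.le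
            have h3 : 0 ≤ (μh ^ i - 1) / (μh - 1) * (1 / μ₂) := by
              apply mul_nonneg (div_nonneg (by linarith) (by linarith)) (by positivity)
            linarith
          have hstep := step_upper (t := t) (q := q) hμ₂ hμ₃ hσ hS0 hY0 hX0 hc0 hts hqs hS' hY'
          have harec : lam⁻¹ * μh ^ (i + 1) + (μh ^ (i + 1) - 1) / (μh - 1) * (1 / μ₂)
              = μh * (lam⁻¹ * μh ^ i + (μh ^ i - 1) / (μh - 1) * (1 / μ₂)) + 1 / μ₂ := by
            rw [pow_succ]
            field_simp
            ring
          rw [hquad, harec]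
          rw [← hμhdef] at hstep
          linarith
  obtain ⟨hHerm, hbound⟩ := main p le_rfl
  have hstar : ∀ x : Fin n → ℝ, star x = x := fun x => rfl
  have hcp : 0 < (lam + (p : ℝ) / μ₃)⁻¹ := by positivity
  refine ⟨PosDef.of_dotProduct_mulVec_pos hHerm ?_, PosSemidef.of_dotProduct_mulVec_nonneg (hHerm.sub (smul_one_herm _)) ?_, PosSemidef.of_dotProduct_mulVec_nonneg ((smul_one_herm _).sub hHerm) ?_⟩
  · intro x hx
    rw [hstar]
    exact lt_of_lt_of_le (mul_pos hcp (dot_self_pos hx)) (hbound x).1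
  · intro x
    rw [hstar, sub_mulVec, dotProduct_sub, smul_mulVec, one_mulVec,
      dotProduct_smul, smul_eq_mul, sub_nonneg]
    exact (hbound x).1
  · intro x
    rw [hstar, sub_mulVec, dotProduct_sub, smul_mulVec, one_mulVec,
      dotProduct_smul, smul_eq_mul, sub_nonneg]
    exact (hbound x).2
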